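/- Let (X,d) be a complete metric space, A₁, …, A_N nonempty closed subsets of X, and T : X → X with T(Aᵢ) ⊆ Aᵢ₊₁ for all i (A_{N+1} = A₁). Suppose that for every ε > 0 there exists δ > 0 such that for all i and all x ∈ Aᵢ, y ∈ Aᵢ₊₁ with ε ≤ d(x,y) < ε + δ, one has d(Tx,Ty) < ε. Then ⋂ᵢ Aᵢ is nonempty, T has a fixed point x* ∈ ⋂ᵢ Aᵢ, x* is the unique fixed point of T in ⋃ᵢ Aᵢ, and Tⁿx → x* for all x ∈ ⋃ᵢ Aᵢ. -/

import Mathlib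

open Filter
open Fin.NatCast

section Aux

variable {X : Type*} [MetricSpace X] {N : ℕ} [NeZero N] {A : Fin N → Set X} {T : X → X}

private lemma mkWeak
    (hMK : ∀ ε > (0:ℝ), ∃ δ > (0:ℝ), ∀ i : Fin N, ∀ x ∈ A i, ∀ y ∈ A (i + 1),
      ε ≤ dist x y → dist x y < ε + δ → dist (T x) (T y) < ε) :
    ∀ i : Fin N, ∀ x ∈ A i, ∀ y ∈ A (i + 1), dist (T x) (T y) ≤ dist x y := by
  intro i x hx y hy
  rcases eq_or_ne x y with rfl | hne
  · simp
  · have hpos : 0 < dist x y := dist_pos.2 hne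
    obtain ⟨δ, hδ, hδ'⟩ := hMK (dist x y) hpos
    exact le_of_lt (hδ' i x hx y hy le_rfl (lt_add_of_pos_right _ hδ))

private lemma mkStrict
    (hMK : ∀ ε > (0:ℝ), ∃ δ > (0:ℝ), ∀ i : Fin N, ∀ x ∈ A i, ∀ y ∈ A (i + 1),
      ε ≤ dist x y → dist x y < ε + δ → dist (T x) (T y) < ε) :
    ∀ i : Fin N, ∀ x ∈ A i, ∀ y ∈ A (i + 1), x ≠ y → dist (T x) (T y) < dist x y := by
  intro i x hx y hy hne
  have hpos : 0 < dist x y := dist_pos.2 hne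
  obtain ⟨δ, hδ, hδ'⟩ := hMK (dist x y) hpos
  exact hδ' i x hx y hy le_rfl (lt_add_of_pos_right _ hδ)

/-- Key convergence lemma: two parallel orbits in adjacent sets have distance tending to 0. -/
private lemma distTendstoZero
    (hMK : ∀ ε > (0:ℝ), ∃ δ > (0:ℝ), ∀ i : Fin N, ∀ x ∈ A i, ∀ y ∈ A (i + 1),
      ε ≤ dist x y → dist x y < ε + δ → dist (T x) (T y) < ε)
    (u v : ℕ → X)
    (hin : ∀ n, ∃ i, u n ∈ A i ∧ v n ∈ A (i + 1))
    (hsu : ∀ n, u (n + 1) = T (u n)) (hsv : ∀ n, v (n + 1) = T (v n)) :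
    Tendsto (fun n => dist (u n) (v n)) atTop (nhds 0) := by
  have hweak := mkWeak hMK
  set d : ℕ → ℝ := fun n => dist (u n) (v n) with hd
  have hsucc : ∀ n, d (n + 1) ≤ d n := by
    intro n
    obtain ⟨i, hui, hvi⟩ := hin n
    have := hweak i (u n) hui (v n) hvi
    simpa [hd, hsu n, hsv n] using this
  have hanti : Antitone d := antitone_nat_of_succ_le hsucc
  have hbdd : BddBelow (Set.range d) := ⟨0, by rintro r ⟨n, rfl⟩; exact dist_nonneg⟩
  have hlim : Tendsto d atTop (nhds (⨅ n, d n)) := tendsto_atTop_ciInf hanti hbdd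
  have hr0 : 0 ≤ ⨅ n, d n := le_ciInf fun n => dist_nonneg
  rcases hr0.lt_or_eq with hr | hr
  · exfalso
    obtain ⟨δ, hδ, hδ'⟩ := hMK _ hr
    obtain ⟨n, hn⟩ := exists_lt_of_ciInf_lt (lt_add_of_pos_right (⨅ n, d n) hδ)
    have h1 : (⨅ n, d n) ≤ d n := ciInf_le hbdd n
    obtain ⟨i, hui, hvi⟩ := hin n
    have h2 := hδ' i (u n) hui (v n) hvi h1 hn
    have h3 : (⨅ n, d n) ≤ d (n + 1) := ciInf_le hbdd (n + 1)
    rw [hd] at h3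
    simp only [hsu n, hsv n] at h3
    linarith
  · rwa [← hr] at hlim

private lemma orbitMem (hcyc : ∀ i : Fin N, ∀ x ∈ A i, T x ∈ A (i + 1))
    (i : Fin N) (x : X) (hx : x ∈ A i) : ∀ n : ℕ, T^[n] x ∈ A (i + (n : Fin N)) := by
  intro n
  induction n with
  | zero => simpa using hx
  | succ n ih =>
    have := hcyc _ _ ih
    rw [← Function.iterate_succ_apply' T n x] at this
    have e : (i + ((n : ℕ) : Fin N)) + 1 = i + (((n + 1 : ℕ)) : Fin N) := by
      push_cast; rw [add_assoc]
    rwa [e] at this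

private lemma natAux (N a : ℕ) (h : 0 < N) : ∃ j k, j < N ∧ a + j = k * N := by
  induction a with
  | zero => exact ⟨0, 0, h, by simp⟩
  | succ a ih =>
    obtain ⟨j, k, hj, he⟩ := ih
    rcases Nat.eq_zero_or_pos j with h0 | hp
    · refine ⟨N - 1, k + 1, by omega, ?_⟩
      calc a + 1 + (N - 1) = a + N := by omega
        _ = a + j + N := by omega
        _ = k * N + N := by rw [he]
        _ = (k + 1) * N := by ring
    · exact ⟨j - 1, k, by omega, by omega⟩

end Aux

theorem stmt_16 {X : Type*} [MetricSpace X] [CompleteSpace X]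
    (N : ℕ) [NeZero N] (A : Fin N → Set X)
    (hne : ∀ i, (A i).Nonempty) (hcl : ∀ i, IsClosed (A i))
    (T : X → X) (hcyc : ∀ i : Fin N, ∀ x ∈ A i, T x ∈ A (i + 1))
    (hMK : ∀ ε > (0:ℝ), ∃ δ > (0:ℝ), ∀ i : Fin N, ∀ x ∈ A i, ∀ y ∈ A (i + 1),
      ε ≤ dist x y → dist x y < ε + δ → dist (T x) (T y) < ε) :
    (⋂ i, A i).Nonempty ∧
    ∃ xs : X, xs ∈ ⋂ i, A i ∧ T xs = xs ∧
      (∀ y ∈ ⋃ i, A i, T y = y → y = xs) ∧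
      ∀ x ∈ ⋃ i, A i, Tendsto (fun n : ℕ => T^[n] x) atTop (nhds xs) := by
  have hN1 : 1 ≤ N := Nat.one_le_iff_ne_zero.2 (NeZero.ne N)
  have hweak := mkWeak hMK
  have hstrict := mkStrict hMK
  obtain ⟨x0, hx0⟩ := hne 0
  set x : ℕ → X := fun n => T^[n] x0 with hxdef
  have horb : ∀ n : ℕ, x n ∈ A ((n : ℕ) : Fin N) := by
    intro n
    have := orbitMem hcyc 0 x0 hx0 n
    simpa using this
  -- parallel-orbit hypothesis for steps
  have hinstep : ∀ n : ℕ, ∃ i, x n ∈ A i ∧ x (n + 1) ∈ A (i + 1) := by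
    intro n
    refine ⟨(n : Fin N), horb n, ?_⟩
    have := horb (n + 1)
    have e : (((n + 1 : ℕ)) : Fin N) = ((n : ℕ) : Fin N) + 1 := by push_cast; ring
    rwa [e] at this
  have hstep0 : Tendsto (fun n => dist (x n) (x (n + 1))) atTop (nhds 0) :=
    distTendstoZero hMK x (fun n => x (n + 1)) hinstep
      (fun n => by simp [hxdef, Function.iterate_succ_apply'])
      (fun n => by simp [hxdef, Function.iterate_succ_apply'])
  -- the main Cauchy-type claim
  have claim : ∀ ε > (0:ℝ), ∃ n₀ : ℕ, ∀ k n, n₀ ≤ n →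
      dist (x (n + 1)) (x (n + k * N + 2)) < ε := by
    intro ε hε
    obtain ⟨δ₀, hδ₀, hδ₀'⟩ := hMK ε hε
    set δ := min δ₀ ε with hδdef
    have hδ : 0 < δ := lt_min hδ₀ hε
    have hδε : δ ≤ ε := min_le_right _ _
    have hδδ₀ : δ ≤ δ₀ := min_le_left _ _
    have hden : (0:ℝ) < δ / (N + 1) := by positivity
    obtain ⟨n₀, hn₀⟩ := (Metric.tendsto_atTop.1 hstep0) (δ / (N + 1)) hden
    have hstepsmall : ∀ j, n₀ ≤ j → dist (x j) (x (j + 1)) < δ / (N + 1) := by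
      intro j hj
      have := hn₀ j hj
      rwa [Real.dist_eq, sub_zero, abs_of_nonneg dist_nonneg] at this
    refine ⟨n₀, ?_⟩
    intro k
    induction k with
    | zero =>
      intro n hn
      have h := hstepsmall (n + 1) (by omega)
      have : δ / (N + 1) ≤ ε := le_trans (by
        rw [div_le_iff₀ (by positivity)]
        nlinarith) hδε
      simpa using lt_of_lt_of_le h this
    | succ k ih =>
      intro n hn
      -- key distance bound
      have hsum : dist (x n) (x (n + N)) ≤ (N:ℝ) * (δ / (N + 1)) := by
        have h1 : dist (x n) (x (n + N)) ≤
            ∑ j ∈ Finset.range N, dist (x (n + j)) (x (n + j + 1)) := by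
          have := dist_le_range_sum_dist (fun j => x (n + j)) N
          simpa [add_assoc] using this
        have h2 : ∑ j ∈ Finset.range N, dist (x (n + j)) (x (n + j + 1)) ≤
            ∑ _j ∈ Finset.range N, (δ / (N + 1)) := by
          refine Finset.sum_le_sum fun j _ => le_of_lt (hstepsmall (n + j) (by omega))
        calc dist (x n) (x (n + N)) ≤ _ := h1
          _ ≤ _ := h2
          _ = (N:ℝ) * (δ / (N + 1)) := by
              simp [Finset.sum_const, Finset.card_range, nsmul_eq_mul]
      have hIH' : dist (x (n + N)) (x (n + (k + 1) * N + 1)) < ε := by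
        have h := ih (n + (N - 1)) (by omega)
        rw [show n + (N - 1) + 1 = n + N by omega,
            show n + (N - 1) + k * N + 2 = n + (k + 1) * N + 1 by
              have : (k + 1) * N = k * N + N := by ring
              omega] at h
        exact h
      have hNlt : (N:ℝ) * (δ / (N + 1)) < δ := by
        have hNpos : (0:ℝ) < (N:ℝ) := by exact_mod_cast (show 0 < N by omega)
        rw [mul_div_assoc', div_lt_iff₀ (by positivity)]
        nlinarith
      have key : dist (x n) (x (n + (k + 1) * N + 1)) < ε + δ := by
        calc dist (x n) (x (n + (k + 1) * N + 1))
            ≤ dist (x n) (x (n + N)) + dist (x (n + N)) (x (n + (k + 1) * N + 1)) :=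
              dist_triangle _ _ _
          _ < (N:ℝ) * (δ / (N + 1)) + ε := by
              have := hIH'
              have := hsum
              linarith
          _ < ε + δ := by linarith
      -- adjacency
      have hadj1 : x n ∈ A ((n : ℕ) : Fin N) := horb n
      have hadj2 : x (n + (k + 1) * N + 1) ∈ A (((n : ℕ) : Fin N) + 1) := by
        have := horb (n + (k + 1) * N + 1)
        have e : (((n + (k + 1) * N + 1 : ℕ)) : Fin N) = ((n : ℕ) : Fin N) + 1 := by
          simp [Nat.cast_add, Nat.cast_mul, Fin.natCast_self]
        rwa [e] at this
      have hxsucc : x (n + 1) = T (x n) := by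
        simp [hxdef, Function.iterate_succ_apply']
      have hxsucc2 : x (n + (k + 1) * N + 2) = T (x (n + (k + 1) * N + 1)) := by
        rw [show n + (k + 1) * N + 2 = (n + (k + 1) * N + 1) + 1 by ring]
        simp [hxdef, Function.iterate_succ_apply']
      rw [hxsucc, hxsucc2]
      by_cases hcase : dist (x n) (x (n + (k + 1) * N + 1)) < ε
      · exact lt_of_le_of_lt (hweak _ _ hadj1 _ hadj2) hcase
      · push_neg at hcase
        exact hδ₀' _ _ hadj1 _ hadj2 hcase (lt_of_lt_of_le key (by linarith))
  -- Cauchy sequence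
  have hcauchy : CauchySeq x := by
    rw [Metric.cauchySeq_iff']
    intro ε hε
    obtain ⟨n₀, hn₀⟩ := claim (ε / 2) (by positivity)
    have hc : (0:ℝ) < ε / (2 * N) := by positivity
    obtain ⟨n₂, hn₂⟩ := (Metric.tendsto_atTop.1 hstep0) (ε / (2 * N)) hc
    have hstepsmall : ∀ j, n₂ ≤ j → dist (x j) (x (j + 1)) < ε / (2 * N) := by
      intro j hj
      have := hn₂ j hj
      rwa [Real.dist_eq, sub_zero, abs_of_nonneg dist_nonneg] at this
    set M := max n₀ n₂ + 1 with hM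
    refine ⟨M, fun n hn => ?_⟩
    rcases eq_or_lt_of_le hn with rfl | hlt
    · simpa using hε
    · -- n > M
      obtain ⟨j, k, hj, he⟩ := natAux N (n - (M + 1)) (by omega)
      obtain ⟨c, hc'⟩ : ∃ c, c = k * N := ⟨_, rfl⟩
      rw [← hc'] at he
      have hnj : n + j = M + 1 + c := by omega
      -- dist (x M) (x (n+j)) < ε/2 by claim with base M-1 = max n₀ n₂
      have h1 : dist (x M) (x (n + j)) < ε / 2 := by
        have h := hn₀ k (max n₀ n₂) (le_max_left _ _)
        rw [show max n₀ n₂ + 1 = M by omega,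
            show max n₀ n₂ + k * N + 2 = M + 1 + k * N by omega, ← hc'] at h
        rwa [← hnj] at h
      have h2 : dist (x (n + j)) (x n) ≤ (j:ℝ) * (ε / (2 * N)) := by
        rw [dist_comm]
        have hle : dist (x n) (x (n + j)) ≤
            ∑ t ∈ Finset.range j, dist (x (n + t)) (x (n + t + 1)) := by
          have := dist_le_range_sum_dist (fun t => x (n + t)) j
          simpa [add_assoc] using this
        have h2' : ∑ t ∈ Finset.range j, dist (x (n + t)) (x (n + t + 1)) ≤
            ∑ _t ∈ Finset.range j, (ε / (2 * N)) :=
          Finset.sum_le_sum fun t _ => le_of_lt (hstepsmall (n + t) (by omega))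
        calc dist (x n) (x (n + j)) ≤ _ := hle
          _ ≤ _ := h2'
          _ = (j:ℝ) * (ε / (2 * N)) := by
              simp [Finset.sum_const, Finset.card_range, nsmul_eq_mul]
      have h3 : (j:ℝ) * (ε / (2 * N)) < ε / 2 := by
        have hjN : (j:ℝ) < (N:ℝ) := by exact_mod_cast hj
        have hNpos : (0:ℝ) < N := by exact_mod_cast (show 0 < N by omega)
        have : (j:ℝ) * (ε / (2 * N)) < (N:ℝ) * (ε / (2 * N)) :=
          mul_lt_mul_of_pos_right hjN hc
        have he2 : (N:ℝ) * (ε / (2 * N)) = ε / 2 := by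
          field_simp
        linarith [he2 ▸ this]
      have h1' : dist (x (n + j)) (x M) < ε / 2 := by rw [dist_comm]; exact h1
      have h2' : dist (x n) (x (n + j)) ≤ (j:ℝ) * (ε / (2 * N)) := by
        rw [dist_comm]; exact h2
      calc dist (x n) (x M) ≤ dist (x n) (x (n + j)) + dist (x (n + j)) (x M) :=
            dist_triangle _ _ _
        _ < ε := by linarith
  obtain ⟨xs, hxs⟩ := cauchySeq_tendsto_of_complete hcauchy
  -- xs belongs to every A i
  have ecast : ∀ (m k : ℕ), ((m + k * N : ℕ) : Fin N) = ((m : ℕ) : Fin N) := by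
    intro m k
    simp [Nat.cast_add, Nat.cast_mul, Fin.natCast_self]
  have hmem : ∀ i, xs ∈ A i := by
    intro i
    have hmono : Tendsto (fun k : ℕ => i.val + k * N) atTop atTop := by
      apply tendsto_atTop_mono (fun k => ?_) tendsto_id
      calc (k : ℕ) = k * 1 := by ring
        _ ≤ k * N := Nat.mul_le_mul_left k hN1
        _ ≤ i.val + k * N := Nat.le_add_left _ _
    have hsub : Tendsto (fun k : ℕ => x (i.val + k * N)) atTop (nhds xs) := hxs.comp hmono
    refine (hcl i).mem_of_tendsto hsub (Eventually.of_forall fun k => ?_)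
    have := horb (i.val + k * N)
    rwa [ecast, Fin.cast_val_eq_self] at this
  -- fixed point
  have hTxs : T xs = xs := by
    have h1 : Tendsto (fun n => x (n + 1)) atTop (nhds xs) :=
      hxs.comp (tendsto_add_atTop_nat 1)
    have h2 : Tendsto (fun n => x (n + 1)) atTop (nhds (T xs)) := by
      rw [tendsto_iff_dist_tendsto_zero]
      have hb : ∀ n, dist (x (n + 1)) (T xs) ≤ dist (x n) xs := by
        intro n
        have hx1 : x (n + 1) = T (x n) := by simp [hxdef, Function.iterate_succ_apply']
        rw [hx1]
        exact hweak _ _ (horb n) _ (hmem _)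
      exact squeeze_zero (fun n => dist_nonneg) hb
        (tendsto_iff_dist_tendsto_zero.1 hxs)
    exact tendsto_nhds_unique h2 h1
  refine ⟨⟨xs, Set.mem_iInter.2 hmem⟩, xs, Set.mem_iInter.2 hmem, hTxs, ?_, ?_⟩
  · -- uniqueness
    intro y hy hTy
    obtain ⟨i, hi⟩ := Set.mem_iUnion.1 hy
    by_contra hne'
    have := hstrict i y hi xs (hmem _) hne'
    rw [hTy, hTxs] at this
    exact lt_irrefl _ this
  · -- convergence
    intro z hz
    obtain ⟨i, hi⟩ := Set.mem_iUnion.1 hz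
    rw [tendsto_iff_dist_tendsto_zero]
    refine distTendstoZero hMK (fun n => T^[n] z) (fun _ => xs) ?_ ?_ ?_
    · intro n
      exact ⟨i + n, orbitMem hcyc i z hi n, hmem _⟩
    · intro n
      simp [Function.iterate_succ_apply']
    · intro n
      exact hTxs.symm
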